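/- Let X be locally connected, I a negligible subset of X, and J a negligible subset of the subspace X − I. Then I ∪ J is negligible in X. -/
import Mathlib


open Set Topology

/-- An open subset `U` is Z-dense if it meets every non-empty open connected set
in a non-empty connected set. -/
def IsZDense {X : Type*} [TopologicalSpace X] (U : Set X) : Prop :=
  IsOpen U ∧ ∀ C : Set X, IsOpen C → IsConnected C → IsConnected (U ∩ C)

/-- A subset is negligible if its complement is Z-dense. -/
def IsNegligible {X : Type*} [TopologicalSpace X] (I : Set X) : Prop :=
  IsZDense Iᶜ

/-- If `I` is negligible in `X` and `J ⊆ X − I` is negligible in the subspace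
`X − I`, then `I ∪ J` is negligible in `X`. -/
theorem IsNegligible.union_of_negligible_in_compl {X : Type*} [TopologicalSpace X]
    [LocallyConnectedSpace X] {I J : Set X} (hI : IsNegligible I) (hJI : J ⊆ Iᶜ)
    (hJ : IsNegligible ((Subtype.val ⁻¹' J : Set ↥(Iᶜ)))) :
    IsNegligible (I ∪ J) := by
  have hval : ∀ S : Set ↥(Iᶜ), Subtype.val '' S ⊆ Iᶜ := fun S =>
    (image_subset_range _ _).trans (by rw [Subtype.range_val])
  constructor
  · have : ((I ∪ J)ᶜ : Set X) = Subtype.val '' ((Subtype.val ⁻¹' J : Set ↥(Iᶜ))ᶜ) := by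
      rw [compl_union, ← preimage_compl, Subtype.image_preimage_coe]
    rw [this]
    exact hI.1.isOpenMap_subtype_val _ hJ.1
  · intro C hC hCconn
    have h1 : IsConnected (Iᶜ ∩ C) := hI.2 C hC hCconn
    set D : Set ↥(Iᶜ) := Subtype.val ⁻¹' C with hD
    have himD : Subtype.val '' D = Iᶜ ∩ C := by
      rw [hD, Subtype.image_preimage_coe]
    have hDconn : IsConnected D := by
      refine ⟨?_, ?_⟩
      · obtain ⟨x, hx⟩ := h1.nonempty
        exact ⟨⟨x, hx.1⟩, hx.2⟩
      · rw [← IsInducing.subtypeVal.isPreconnected_image, himD]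
        exact h1.isPreconnected
    have hDopen : IsOpen D := hC.preimage continuous_subtype_val
    have h2 := hJ.2 D hDopen hDconn
    have himage : Subtype.val '' ((Subtype.val ⁻¹' J : Set ↥(Iᶜ))ᶜ ∩ D) = (I ∪ J)ᶜ ∩ C := by
      rw [← preimage_compl, hD, ← preimage_inter, Subtype.image_preimage_coe, compl_union]
      ext x; simp; tauto
    refine ⟨?_, ?_⟩
    · obtain ⟨x, hx⟩ := h2.nonempty
      exact ⟨x, by rw [← himage]; exact mem_image_of_mem _ hx⟩
    · rw [← himage, IsInducing.subtypeVal.isPreconnected_image]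
      exact h2.isPreconnected
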